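/- The only finite-dimensional associative division algebras over the real numbers are (up to isomorphism) the real numbers ℝ, the complex numbers ℂ, and the quaternions ℍ (Frobenius theorem). -/

import Mathlib

open Polynomial

namespace FrobeniusAux

variable {D : Type*} [DivisionRing D] [Algebra ℝ D] [FiniteDimensional ℝ D]

/-- every element satisfies a real quadratic -/
theorem quadratic (x : D) : ∃ t n : ℝ, x * x = t • x + n • (1 : D) := by
  have hint : IsIntegral ℝ x := IsIntegral.of_finite ℝ x
  set p := minpoly ℝ x with hp
  have hmon : p.Monic := minpoly.monic hint
  have hirr : Irreducible p := minpoly.irreducible hint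
  have hdegpos : 0 < p.natDegree := minpoly.natDegree_pos hint
  have hC : ∃ z : ℂ, aeval z p = 0 := by
    obtain ⟨z, hz⟩ := Complex.exists_root (f := p.map (algebraMap ℝ ℂ)) (by
      rw [Polynomial.degree_map, Polynomial.degree_eq_natDegree hmon.ne_zero]
      exact_mod_cast hdegpos)
    refine ⟨z, ?_⟩
    rwa [Polynomial.aeval_def, ← Polynomial.eval_map]
  obtain ⟨z, hz⟩ := hC
  have hzint : IsIntegral ℝ z := IsIntegral.of_finite ℝ z
  have hassoc : p = minpoly ℝ z := by
    have hdvd : minpoly ℝ z ∣ p := minpoly.dvd ℝ z hz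
    exact (Polynomial.eq_of_monic_of_associated hmon (minpoly.monic hzint)
      ((minpoly.irreducible hzint).associated_of_dvd hirr hdvd).symm)
  have hdeg2 : p.natDegree ≤ 2 := by
    rw [hassoc]
    simpa [Complex.finrank_real_complex] using minpoly.natDegree_le (A := ℝ) z
  have haev : (Polynomial.aeval x) p = 0 := minpoly.aeval ℝ x
  have h12 : p.natDegree = 1 ∨ p.natDegree = 2 := by omega
  rcases h12 with hd | hd
  · have hsum := Polynomial.aeval_eq_sum_range (R := ℝ) (p := p) x
    rw [hd] at hsum
    rw [hsum] at haev
    simp [Finset.sum_range_succ] at haev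
    have hc1 : p.coeff 1 = 1 := by simpa [hd] using hmon.coeff_natDegree
    rw [hc1, one_smul] at haev
    have hx : x = (-p.coeff 0) • (1 : D) := by
      rw [neg_smul, eq_neg_iff_add_eq_zero]
      linear_combination (norm := module) haev
    refine ⟨-p.coeff 0, 0, ?_⟩
    calc x * x = ((-p.coeff 0) • (1 : D)) * x := by rw [← hx]
    _ = (-p.coeff 0) • x := by rw [smul_mul_assoc, one_mul]
    _ = (-p.coeff 0) • x + (0:ℝ) • (1:D) := by rw [zero_smul, add_zero]
  · have hsum := Polynomial.aeval_eq_sum_range (R := ℝ) (p := p) x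
    rw [hd] at hsum
    rw [hsum] at haev
    simp [Finset.sum_range_succ] at haev
    have hc2 : p.coeff 2 = 1 := by simpa [hd] using hmon.coeff_natDegree
    rw [hc2, one_smul] at haev
    refine ⟨-p.coeff 1, -p.coeff 0, ?_⟩
    have hxx : x * x = x ^ 2 := (sq x).symm
    rw [hxx]
    linear_combination (norm := module) haev

/-- "purely imaginary" elements -/
def P (x : D) : Prop := ∃ r : ℝ, r ≤ 0 ∧ x * x = r • (1 : D)

omit [FiniteDimensional ℝ D] in
theorem smul_one_inj {a b : ℝ} (h : a • (1 : D) = b • (1 : D)) : a = b := by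
  have h2 : (a - b) • (1 : D) = 0 := by rw [sub_smul, h, sub_self]
  rcases smul_eq_zero.mp h2 with h3 | h3
  · exact sub_eq_zero.mp h3
  · exact absurd h3 one_ne_zero

omit [FiniteDimensional ℝ D] in
theorem eq_inv_smul {c : ℝ} (hc : c ≠ 0) {x z : D} (h : c • x = z) : x = c⁻¹ • z := by
  rw [← h, smul_smul, inv_mul_cancel₀ hc, one_smul]

omit [FiniteDimensional ℝ D] in
theorem eq_zero_of_P_of_real {x : D} (hx : P x) {s : ℝ} (h : x = s • (1 : D)) : x = 0 := by
  obtain ⟨r, hr, hxx⟩ := hx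
  rw [h, smul_mul_assoc, mul_smul_comm, smul_smul, mul_one] at hxx
  have hs : s * s = r := smul_one_inj hxx
  have : s = 0 := by nlinarith
  rw [h, this, zero_smul]

omit [FiniteDimensional ℝ D] in
theorem P_zero : P (0 : D) := ⟨0, le_refl _, by simp⟩

omit [FiniteDimensional ℝ D] in
theorem P_smul {x : D} (hx : P x) (c : ℝ) : P (c • x) := by
  obtain ⟨r, hr, hxx⟩ := hx
  refine ⟨c * c * r, by nlinarith, ?_⟩
  rw [smul_mul_assoc, mul_smul_comm, smul_smul, hxx, smul_smul, mul_assoc]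

/-- if an element squares to a positive real, it is real -/
theorem real_of_sq_pos {x : D} {n : ℝ} (hn : 0 < n) (h : x * x = n • (1 : D)) :
    ∃ s : ℝ, x = s • (1 : D) := by
  set s := Real.sqrt n with hs
  have hs2 : s * s = n := Real.mul_self_sqrt hn.le
  have hfac : (x - s • (1 : D)) * (x + s • (1 : D)) = 0 := by
    simp only [sub_mul, mul_add, add_mul, mul_sub, sub_mul, smul_add, smul_sub, smul_mul_assoc,
      mul_smul_comm, smul_smul, one_mul, mul_one]
    rw [h, hs2]
    module
  rcases mul_eq_zero.mp hfac with h1 | h1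
  · exact ⟨s, by linear_combination (norm := module) h1⟩
  · exact ⟨-s, by rw [neg_smul]; linear_combination (norm := module) h1⟩

theorem indep3 {x y : D} (hx : P x) (hy : P y) (hx0 : x ≠ 0) (hy0 : ∀ c : ℝ, y ≠ c • x)
    {a b c : ℝ} (h : a • (1:D) + b • x + c • y = 0) : a = 0 ∧ b = 0 ∧ c = 0 := by
  have hbase : ∀ a' b' : ℝ, a' • (1:D) + b' • x = 0 → a' = 0 ∧ b' = 0 := by
    intro a' b' h'
    by_cases hb : b' = 0
    · subst hb
      rw [zero_smul, add_zero] at h'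
      rcases smul_eq_zero.mp h' with h'' | h''
      · exact ⟨h'', rfl⟩
      · exact absurd h'' one_ne_zero
    · exfalso
      have h2 : b' • x = (-a') • (1:D) := by
        rw [neg_smul]
        linear_combination (norm := module) h'
      have hxr : x = (b'⁻¹ * -a') • (1:D) := by
        rw [← smul_smul]; exact eq_inv_smul hb h2
      exact hx0 (eq_zero_of_P_of_real hx hxr)
  by_cases hc : c = 0
  · subst hc
    rw [zero_smul, add_zero] at h
    obtain ⟨ha, hb⟩ := hbase a b h
    exact ⟨ha, hb, rfl⟩
  · exfalso
    set α := -(a/c) with hα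
    set β := -(b/c) with hβ
    have hyr : y = α • (1:D) + β • x := by
      rw [hα, hβ]
      have h2 : c • y = (-a) • (1:D) + (-b) • x := by
        rw [neg_smul, neg_smul]
        linear_combination (norm := module) h
      have h3 := eq_inv_smul hc h2
      rw [smul_add, smul_smul, smul_smul] at h3
      rw [h3]
      have e1 : c⁻¹ * -a = -(a/c) := by field_simp
      have e2 : c⁻¹ * -b = -(b/c) := by field_simp
      rw [e1, e2]
    obtain ⟨rx, hrx, hxx⟩ := hx
    obtain ⟨ry, hry, hyy⟩ := hy
    have hyy2 : (α * α + β * β * rx) • (1:D) + (2 * (α * β)) • x = ry • (1:D) := by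
      rw [← hyy, hyr]
      simp only [add_mul, mul_add, smul_mul_assoc, mul_smul_comm, smul_smul, one_mul, mul_one]
      rw [hxx]
      match_scalars <;> ring
    by_cases hαβ : α * β = 0
    · rcases mul_eq_zero.mp hαβ with h0 | h0
      · -- α = 0 : y = β • x
        rw [h0, zero_smul, zero_add] at hyr
        exact hy0 β hyr
      · -- β = 0 : y real
        rw [h0, zero_smul, add_zero] at hyr
        have : y = 0 := eq_zero_of_P_of_real ⟨ry, hry, hyy⟩ hyr
        exact hy0 0 (by rw [this, zero_smul])
    · -- x would be real
      have h2 : (2 * (α * β)) • x = (ry - α * α - β * β * rx) • (1:D) := by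
        linear_combination (norm := module) hyy2
      have hne : (2 * (α * β)) ≠ 0 := mul_ne_zero two_ne_zero hαβ
      have hxr : x = ((2 * (α * β))⁻¹ * (ry - α * α - β * β * rx)) • (1:D) := by
        rw [← smul_smul]; exact eq_inv_smul hne h2
      exact hx0 (eq_zero_of_P_of_real ⟨rx, hrx, hxx⟩ hxr)

theorem P_add {x y : D} (hx : P x) (hy : P y) : P (x + y) := by
  by_cases hx0 : x = 0
  · rw [hx0, zero_add]; exact hy
  by_cases hdep : ∃ c : ℝ, y = c • x
  · obtain ⟨c, rfl⟩ := hdep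
    have : x + c • x = (1 + c) • x := by module
    rw [this]
    exact P_smul hx _
  push_neg at hdep
  obtain ⟨rx, hrx, hxx⟩ := hx
  obtain ⟨ry, hry, hyy⟩ := hy
  obtain ⟨t, n, h1⟩ := quadratic (x + y)
  obtain ⟨t', n', h2⟩ := quadratic (x - y)
  have e1 : x * x + (x * y + y * x) + y * y = t • x + t • y + n • (1:D) := by
    have := h1
    simp only [add_mul, mul_add, smul_add] at this
    linear_combination (norm := module) this
  have e2 : x * x - (x * y + y * x) + y * y = t' • x - t' • y + n' • (1:D) := by
    have := h2
    simp only [sub_mul, mul_sub, smul_sub] at this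
    linear_combination (norm := module) this
  have E : (n + n' - (2 * rx + 2 * ry)) • (1:D) + (t + t') • x + (t - t') • y = 0 := by
    have e3 := e1
    rw [hxx, hyy] at e3
    have e4 := e2
    rw [hxx, hyy] at e4
    have esum : (2 * rx + 2 * ry) • (1:D) = (t + t') • x + (t - t') • y + (n + n') • (1:D) := by
      linear_combination (norm := module) e3 + e4
    linear_combination (norm := module) -esum
  obtain ⟨hA, hB, hC⟩ := indep3 ⟨rx, hrx, hxx⟩ ⟨ry, hry, hyy⟩ hx0 hdep E
  have ht : t = 0 := by linarith
  rw [ht, zero_smul, zero_add] at h1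
  by_cases hn : n ≤ 0
  · exact ⟨n, hn, h1⟩
  · exfalso
    push_neg at hn
    obtain ⟨s, hss⟩ := real_of_sq_pos hn h1
    have E2 : (-s) • (1:D) + (1:ℝ) • x + (1:ℝ) • y = 0 := by
      rw [neg_smul, one_smul, one_smul]
      linear_combination (norm := module) hss
    obtain ⟨_, hone, _⟩ := indep3 ⟨rx, hrx, hxx⟩ ⟨ry, hry, hyy⟩ hx0 hdep E2
    exact one_ne_zero hone

/-- every element is real plus purely imaginary -/
theorem decomp (x : D) : ∃ r : ℝ, ∃ v : D, P v ∧ x = r • (1:D) + v := by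
  obtain ⟨t, n, hq⟩ := quadratic x
  set v := x - (t/2) • (1:D) with hv
  have hvv : v * v = (n + t^2/4) • (1:D) := by
    rw [hv]
    simp only [sub_mul, mul_sub, smul_mul_assoc, mul_smul_comm, smul_smul, one_mul, mul_one,
      smul_sub]
    rw [hq]
    match_scalars <;> ring
  by_cases hm : n + t^2/4 ≤ 0
  · exact ⟨t/2, v, ⟨n + t^2/4, hm, hvv⟩, by rw [hv]; module⟩
  · push_neg at hm
    obtain ⟨s, hss⟩ := real_of_sq_pos hm hvv
    refine ⟨t/2 + s, 0, P_zero, ?_⟩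
    rw [add_smul, add_zero, ← hss, hv]
    module

theorem pairing {u v : D} (hu : P u) (hv : P v) : ∃ s : ℝ, u * v + v * u = s • (1:D) := by
  have hu' := hu
  have hv' := hv
  obtain ⟨ru, _, huu⟩ := hu'
  obtain ⟨rv, _, hvv⟩ := hv'
  obtain ⟨r, _, hw⟩ := P_add hu hv
  refine ⟨r - ru - rv, ?_⟩
  have : u * u + (u * v + v * u) + v * v = r • (1:D) := by
    have := hw
    simp only [add_mul, mul_add] at this
    linear_combination (norm := module) this
  rw [huu, hvv] at this
  linear_combination (norm := module) this

theorem normalize {u : D} (hu : P u) (h0 : u ≠ 0) :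
    ∃ c : ℝ, c ≠ 0 ∧ (c • u) * (c • u) = -1 := by
  obtain ⟨r, hr, huu⟩ := hu
  have hrne : r ≠ 0 := by
    intro h
    rw [h, zero_smul] at huu
    rcases mul_eq_zero.mp huu with h' | h' <;> exact h0 h'
  have hrlt : r < 0 := lt_of_le_of_ne hr hrne
  have hspos : 0 < Real.sqrt (-r) := Real.sqrt_pos.mpr (by linarith)
  have hs2 : Real.sqrt (-r) * Real.sqrt (-r) = -r := Real.mul_self_sqrt (by linarith)
  refine ⟨(Real.sqrt (-r))⁻¹, inv_ne_zero hspos.ne', ?_⟩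
  set c := (Real.sqrt (-r))⁻¹ with hc
  have hcr : c * c * r = -1 := by
    rw [hc]
    field_simp
    linarith
  calc (c • u) * (c • u) = (c * c) • (u * u) := by
        rw [smul_mul_assoc, mul_smul_comm, smul_smul]
  _ = (c * c * r) • (1:D) := by rw [huu, smul_smul]
  _ = (-1 : ℝ) • (1:D) := by rw [hcr]
  _ = -1 := by rw [neg_smul, one_smul]

end FrobeniusAux

open FrobeniusAux in
/-- Frobenius theorem: every finite-dimensional associative division algebra over
`ℝ` is isomorphic, as an `ℝ`-algebra, to `ℝ`, `ℂ` or the quaternions `ℍ`. -/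
theorem frobenius_division_algebras
    (D : Type*) [DivisionRing D] [Algebra ℝ D] [FiniteDimensional ℝ D] :
    Nonempty (D ≃ₐ[ℝ] ℝ) ∨ Nonempty (D ≃ₐ[ℝ] ℂ) ∨
      Nonempty (D ≃ₐ[ℝ] Quaternion ℝ) := by
  classical
  by_cases hV : ∀ x : D, P x → x = 0
  · -- D ≅ ℝ
    left
    refine ⟨(AlgEquiv.ofBijective (Algebra.ofId ℝ D) ⟨?_, ?_⟩).symm⟩
    · exact fun a b h => (algebraMap ℝ D).injective h
    · intro x
      obtain ⟨r, v, hv, hx⟩ := decomp x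
      rw [hV v hv, add_zero] at hx
      exact ⟨r, by rw [Algebra.ofId_apply, Algebra.algebraMap_eq_smul_one, hx]⟩
  push_neg at hV
  obtain ⟨u, hu, hu0⟩ := hV
  obtain ⟨cu, hcu0, hii⟩ := normalize hu hu0
  set i := cu • u with hidef
  have hPi : P i := P_smul hu cu
  have hii' : i * i = (-1 : ℝ) • (1:D) := by rw [hii, neg_smul, one_smul]
  by_cases hdim : ∀ y : D, P y → ∃ c : ℝ, y = c • i
  · -- D ≅ ℂ
    right; left
    refine ⟨(AlgEquiv.ofBijective (Complex.liftAux i hii) ⟨?_, ?_⟩).symm⟩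
    · exact RingHom.injective (Complex.liftAux i hii).toRingHom
    · intro x
      obtain ⟨r, v, hvP, hx⟩ := decomp x
      obtain ⟨c, hc⟩ := hdim v hvP
      refine ⟨⟨r, c⟩, ?_⟩
      rw [Complex.liftAux_apply]
      show algebraMap ℝ D r + c • i = x
      rw [Algebra.algebraMap_eq_smul_one, hx, hc]
  · -- D ≅ ℍ
    right; right
    push_neg at hdim
    obtain ⟨v0, hv0P, hv0⟩ := hdim
    obtain ⟨s, hs⟩ := pairing hv0P hPi
    set w := v0 + (s/2) • i with hwdef
    have hPw : P w := P_add hv0P (P_smul hPi _)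
    have hw0 : w ≠ 0 := by
      intro h
      apply hv0 (-(s/2))
      rw [neg_smul, eq_neg_iff_add_eq_zero]
      rw [hwdef] at h
      linear_combination (norm := module) h
    have hanti : i * w + w * i = 0 := by
      rw [hwdef]
      simp only [mul_add, add_mul, mul_smul_comm, smul_mul_assoc]
      rw [hii']
      linear_combination (norm := module) hs
    obtain ⟨cw, hcw0, hjj⟩ := normalize hPw hw0
    set j := cw • w with hjdef
    have hPj : P j := P_smul hPw cw
    have hjj' : j * j = (-1 : ℝ) • (1:D) := by rw [hjj, neg_smul, one_smul]
    have hij_anti : i * j + j * i = 0 := by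
      have e : i * j + j * i = cw • (i * w + w * i) := by
        rw [hjdef, mul_smul_comm cw i w, smul_mul_assoc cw w i, smul_add]
      rw [e, hanti, smul_zero]
    have hji : j * i = -(i * j) := by linear_combination (norm := module) hij_anti
    -- multiplication table
    have hik : i * (i * j) = (-1:ℝ) • j := by
      rw [← mul_assoc, hii', smul_mul_assoc, one_mul]
    have hki : (i * j) * i = (1:ℝ) • j := by
      rw [mul_assoc, hji, mul_neg, hik]
      module
    have hkj : (i * j) * j = (-1:ℝ) • i := by
      rw [mul_assoc, hjj', mul_smul_comm, mul_one]
    have hjk : j * (i * j) = (1:ℝ) • i := by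
      rw [← mul_assoc, hji, neg_mul, hkj]
      module
    have hkk : (i * j) * (i * j) = (-1:ℝ) • (1:D) := by
      rw [mul_assoc, hjk, mul_smul_comm, hii']
      module
    have hPk : P (i * j) := ⟨-1, by norm_num, hkk⟩
    have hk0 : i * j ≠ 0 := by
      intro h
      rw [h, mul_zero] at hkk
      have h2 : (-1:ℝ) = (0:ℝ) := smul_one_inj (by rw [← hkk, zero_smul])
      norm_num at h2
    let basis : QuaternionAlgebra.Basis D (-1 : ℝ) (0 : ℝ) (-1 : ℝ) :=
      { i := i, j := j, k := i * j,
        i_mul_i := by rw [hii', zero_smul, add_zero], j_mul_j := hjj', i_mul_j := rfl,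
        j_mul_i := by rw [hji, zero_smul, zero_sub] }
    refine ⟨(AlgEquiv.ofBijective (show Quaternion ℝ →ₐ[ℝ] D from basis.liftHom) ⟨?_, ?_⟩).symm⟩
    · exact RingHom.injective _
    · intro x
      obtain ⟨r, v, hvP, hx⟩ := decomp x
      obtain ⟨a, ha⟩ := pairing hvP hPi
      obtain ⟨b, hb⟩ := pairing hvP hPj
      obtain ⟨c, hc⟩ := pairing hvP hPk
      set w' := v + (a/2) • i + (b/2) • j + (c/2) • (i * j) with hw'
      have h1 : w' * i + i * w' = 0 := by
        rw [hw']
        simp only [add_mul, mul_add, mul_smul_comm, smul_mul_assoc]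
        rw [hii', hji, hki, hik]
        linear_combination (norm := module) ha
      have h2 : w' * j + j * w' = 0 := by
        rw [hw']
        simp only [add_mul, mul_add, mul_smul_comm, smul_mul_assoc]
        rw [hjj', hji, hkj, hjk]
        linear_combination (norm := module) hb
      have h3 : w' * (i * j) + (i * j) * w' = 0 := by
        rw [hw']
        simp only [add_mul, mul_add, mul_smul_comm, smul_mul_assoc]
        rw [hik, hjk, hki, hkj, hkk]
        linear_combination (norm := module) hc
      have hwi : w' * i = -(i * w') := by linear_combination (norm := module) h1
      have hwj : w' * j = -(j * w') := by linear_combination (norm := module) h2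
      have h4 : w' * (i * j) = (i * j) * w' := by
        calc w' * (i * j) = (w' * i) * j := (mul_assoc _ _ _).symm
        _ = -(i * w') * j := by rw [hwi]
        _ = -(i * (w' * j)) := by rw [neg_mul, mul_assoc]
        _ = -(i * -(j * w')) := by rw [hwj]
        _ = (i * j) * w' := by rw [mul_neg, neg_neg, mul_assoc]
      have h5 : w' * (i * j) = 0 := by
        rw [h4] at h3
        have h7 : (2:ℝ) • ((i * j) * w') = 0 := by
          rw [two_smul]; exact h3
        rcases smul_eq_zero.mp h7 with h8 | h8
        · norm_num at h8
        · rw [h4]; exact h8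
      have hw'0 : w' = 0 := by
        rcases mul_eq_zero.mp h5 with h | h
        · exact h
        · exact absurd h hk0
      have hv' : v + (a/2) • i + (b/2) • j + (c/2) • (i * j) = 0 := by
        rw [← hw']; exact hw'0
      refine ⟨⟨r, -(a/2), -(b/2), -(c/2)⟩, ?_⟩
      show basis.lift ⟨r, -(a/2), -(b/2), -(c/2)⟩ = x
      show algebraMap ℝ D r + (-(a/2)) • basis.i + (-(b/2)) • basis.j + (-(c/2)) • basis.k = x
      show algebraMap ℝ D r + (-(a/2)) • i + (-(b/2)) • j + (-(c/2)) • (i * j) = x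
      rw [Algebra.algebraMap_eq_smul_one, hx]
      linear_combination (norm := module) -hv'
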